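/- Let $(l_1,m_1),\dots,(l_r,m_r)$ be $r$ pairs of non-negative integers with $l_i+m_i\ge 1$ for each $i$, and set $l=\sum_i l_i$, $m=\sum_i m_i$. If $l\ge 2$ and $m\ge 2$, then $(l-1)(m-1)-1 \ge \sum_{i=1}^r l_i m_i - \max_{i=1,\dots,r}(l_i+m_i)$. -/
import Mathlib


theorem stmt_0 (r : ℕ) (hr : 0 < r) (l m : Fin r → ℕ)
    (hlm : ∀ i, 1 ≤ l i + m i)
    (hl : 2 ≤ ∑ i, l i) (hm : 2 ≤ ∑ i, m i) :
    ((∑ i, l i : ℕ) - 1 : ℤ) * ((∑ i, m i : ℕ) - 1) - 1 ≥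
      (∑ i, (l i : ℤ) * m i) -
        Finset.univ.sup' (Finset.univ_nonempty_iff.mpr (Fin.pos_iff_nonempty.mp hr))
          (fun i => (l i : ℤ) + m i) := by
  have hL : (2:ℤ) ≤ ∑ i, (l i : ℤ) := by exact_mod_cast hl
  have hM : (2:ℤ) ≤ ∑ i, (m i : ℤ) := by exact_mod_cast hm
  push_cast
  by_cases h : ∃ j, 1 ≤ l j ∧ 1 ≤ m j
  · obtain ⟨j, hlj, hmj⟩ := h
    have hsup : ((l j : ℤ) + m j) ≤ Finset.univ.sup'
        (Finset.univ_nonempty_iff.mpr (Fin.pos_iff_nonempty.mp hr))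
        (fun i => (l i : ℤ) + m i) :=
      Finset.le_sup' (fun i => (l i : ℤ) + m i) (Finset.mem_univ j)
    have haj : (1:ℤ) ≤ l j := by exact_mod_cast hlj
    have hbj : (1:ℤ) ≤ m j := by exact_mod_cast hmj
    have hLa : (l j : ℤ) ≤ ∑ i, (l i : ℤ) :=
      Finset.single_le_sum (f := fun i => (l i : ℤ)) (fun k _ => by positivity)
        (Finset.mem_univ j)
    have hMb : (m j : ℤ) ≤ ∑ i, (m i : ℤ) :=
      Finset.single_le_sum (f := fun i => (m i : ℤ)) (fun k _ => by positivity)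
        (Finset.mem_univ j)
    have hsplit : ∀ f : Fin r → ℤ,
        ∑ i ∈ Finset.univ.erase j, f i = (∑ i, f i) - f j := fun f =>
      Finset.sum_erase_eq_sub (Finset.mem_univ j)
    have hprod : ∑ i ∈ Finset.univ.erase j, (l i : ℤ) * m i ≤
        ((∑ i, (l i : ℤ)) - l j) * ((∑ i, (m i : ℤ)) - m j) := by
      rw [← hsplit (fun i => (l i : ℤ)), ← hsplit (fun i => (m i : ℤ)),
        Finset.sum_mul]
      refine Finset.sum_le_sum fun i hi => ?_
      exact mul_le_mul_of_nonneg_left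
        (Finset.single_le_sum (f := fun i => (m i : ℤ)) (fun k _ => by positivity) hi)
        (by positivity)
    have hsum : ∑ i, (l i : ℤ) * m i ≤
        (l j : ℤ) * m j + ((∑ i, (l i : ℤ)) - l j) * ((∑ i, (m i : ℤ)) - m j) := by
      have := hsplit (fun i => (l i : ℤ) * m i)
      linarith
    nlinarith [mul_nonneg (by linarith : (0:ℤ) ≤ (∑ i, (l i : ℤ)) - l j)
        (by linarith : (0:ℤ) ≤ (m j : ℤ) - 1),
      mul_nonneg (by linarith : (0:ℤ) ≤ (∑ i, (m i : ℤ)) - m j)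
        (by linarith : (0:ℤ) ≤ (l j : ℤ) - 1)]
  · push_neg at h
    have hzero : ∑ i, (l i : ℤ) * m i = 0 := by
      refine Finset.sum_eq_zero fun i _ => ?_
      have hmi : l i = 0 ∨ m i = 0 := by have := h i; omega
      rcases hmi with h0 | h0 <;> simp [h0]
    have hsup1 : (1:ℤ) ≤ Finset.univ.sup'
        (Finset.univ_nonempty_iff.mpr (Fin.pos_iff_nonempty.mp hr))
        (fun i => (l i : ℤ) + m i) := by
      have i0 : Fin r := ⟨0, hr⟩
      have h1 : (1:ℤ) ≤ (l i0 : ℤ) + m i0 := by exact_mod_cast hlm i0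
      exact h1.trans (Finset.le_sup' (fun i => (l i : ℤ) + m i) (Finset.mem_univ i0))
    rw [hzero]
    nlinarith [hsup1, hL, hM]
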